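/- Fourth moment order: under the same assumptions, E[M_n^4(ζ_1, ζ_2)] = O(ℓ_n^{-3d}) as ℓ_n → 0. -/

import Mathlib

open MeasureTheory ProbabilityTheory Filter
open scoped BigOperators Topology ENNReal

private lemma abs_mul_le7 {a1 a2 a3 a4 a5 a6 a7 b1 b2 b3 b4 b5 b6 b7 : ℝ}
    (h1 : |a1| ≤ b1) (h2 : |a2| ≤ b2) (h3 : |a3| ≤ b3) (h4 : |a4| ≤ b4)
    (h5 : |a5| ≤ b5) (h6 : |a6| ≤ b6) (h7 : |a7| ≤ b7) :
    |a1 * a2 * a3 * a4 * a5 * a6 * a7| ≤ b1 * b2 * b3 * b4 * b5 * b6 * b7 := by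
  have n1 : 0 ≤ b1 := (abs_nonneg _).trans h1
  have n2 : 0 ≤ b2 := (abs_nonneg _).trans h2
  have n3 : 0 ≤ b3 := (abs_nonneg _).trans h3
  have n4 : 0 ≤ b4 := (abs_nonneg _).trans h4
  have n5 : 0 ≤ b5 := (abs_nonneg _).trans h5
  have n6 : 0 ≤ b6 := (abs_nonneg _).trans h6
  rw [abs_mul, abs_mul, abs_mul, abs_mul, abs_mul, abs_mul]
  exact mul_le_mul
    (mul_le_mul
      (mul_le_mul
        (mul_le_mul
          (mul_le_mul
            (mul_le_mul h1 h2 (abs_nonneg _) n1)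
            h3 (abs_nonneg _) (mul_nonneg n1 n2))
          h4 (abs_nonneg _) (mul_nonneg (mul_nonneg n1 n2) n3))
        h5 (abs_nonneg _) (mul_nonneg (mul_nonneg (mul_nonneg n1 n2) n3) n4))
      h6 (abs_nonneg _) (mul_nonneg (mul_nonneg (mul_nonneg (mul_nonneg n1 n2) n3) n4) n5))
    h7 (abs_nonneg _)
    (mul_nonneg (mul_nonneg (mul_nonneg (mul_nonneg (mul_nonneg n1 n2) n3) n4) n5) n6)

/-- Fourth moment order of the degenerate kernel:
`E[M_n⁴(ζ₁,ζ₂)] = O(ℓ_n^{-3d})` as `ℓ_n → 0`. -/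
theorem stmt15 {Ω : Type*} [MeasureSpace Ω] [IsProbabilityMeasure (ℙ : Measure Ω)]
    {d : ℕ} (hd : 1 ≤ d) (X1 X2 : Ω → (Fin d → ℝ)) (ε1 ε2 : Ω → ℝ)
    (L : (Fin d → ℝ) → ℝ) (g : (Fin d → ℝ) → ℝ) (f : (Fin d → ℝ) → ℝ)
    (ℓ : ℕ → ℝ) (hℓpos : ∀ n, 0 < ℓ n) (hℓ0 : Tendsto ℓ atTop (𝓝 0))
    (c Mb : ℝ) (hc : 0 < c) (α : ℝ) (hα : 0 < α)
    (hX1 : Measurable X1) (hX2 : Measurable X2)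
    (hε1 : Measurable ε1) (hε2 : Measurable ε2)
    (hL : Continuous L) (hLsupp : HasCompactSupport L)
    (s : Set (Fin d → ℝ)) (hs : IsCompact s) (hg : g = s.indicator 1)
    (hfcont : Continuous f) (hfc : ∀ x ∈ Metric.thickening α s, c ≤ f x)
    (hlaw : Measure.map X1 ℙ = volume.withDensity (fun x => ENNReal.ofReal (f x)))
    (hεbd : ∀ ω, |ε1 ω| ≤ Mb ∧ |ε2 ω| ≤ Mb)
    (hiid : IndepFun (fun ω => (X1 ω, ε1 ω)) (fun ω => (X2 ω, ε2 ω)) ℙ ∧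
      IdentDistrib (fun ω => (X1 ω, ε1 ω)) (fun ω => (X2 ω, ε2 ω)) ℙ ℙ) :
    ∃ C : ℝ, ∀ᶠ n in atTop,
      ∫ ω, (ℓ n ^ (-(2 * d : ℤ)) *
        ∫ x : Fin d → ℝ, L ((ℓ n)⁻¹ • (x - X1 ω)) * L ((ℓ n)⁻¹ • (x - X2 ω)) *
          ε1 ω * ε2 ω * g x * (f (X1 ω))⁻¹ * (f (X2 ω))⁻¹)^4 ∂ℙ
        ≤ C / ℓ n ^ (3 * d) := by
  classical
  -- radius of the support of L
  obtain ⟨R₀, hR₀⟩ := hLsupp.isBounded.subset_closedBall 0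
  set R : ℝ := max R₀ 1 with hRdef
  have hR1 : (1:ℝ) ≤ R := le_max_right _ _
  have hRpos : (0:ℝ) < R := lt_of_lt_of_le one_pos hR1
  have hsupR : tsupport L ⊆ Metric.closedBall 0 R :=
    hR₀.trans (Metric.closedBall_subset_closedBall (le_max_left _ _))
  -- bound on L
  obtain ⟨KL₀, hKL₀⟩ := IsCompact.exists_bound_of_continuousOn hLsupp hL.continuousOn
  set KL : ℝ := max KL₀ 0 with hKLdef
  have hKLnn : (0:ℝ) ≤ KL := le_max_right _ _
  have hKL : ∀ x, |L x| ≤ KL := by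
    intro x
    by_cases hx : x ∈ tsupport L
    · exact le_max_of_le_left (by simpa [Real.norm_eq_abs] using hKL₀ x hx)
    · rw [image_eq_zero_of_notMem_tsupport hx, abs_zero]; exact hKLnn
  -- bound on f on the closed thickening
  obtain ⟨Mf₀, hMf₀⟩ := IsCompact.exists_bound_of_continuousOn (hs.cthickening (r := α))
    hfcont.continuousOn
  set Mf : ℝ := max Mf₀ 0 with hMfdef
  have hMfnn : (0:ℝ) ≤ Mf := le_max_right _ _
  have hMf : ∀ x ∈ Metric.thickening α s, f x ≤ Mf := by
    intro x hx
    have := hMf₀ x (Metric.thickening_subset_cthickening _ _ hx)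
    rw [Real.norm_eq_abs] at this
    exact le_max_of_le_left ((le_abs_self _).trans this)
  -- bound on ε's
  set Mb' : ℝ := max Mb 0 with hMbdef
  have hMbnn : (0:ℝ) ≤ Mb' := le_max_right _ _
  have hMb1 : ∀ ω, |ε1 ω| ≤ Mb' := fun ω => le_max_of_le_left (hεbd ω).1
  have hMb2 : ∀ ω, |ε2 ω| ≤ Mb' := fun ω => le_max_of_le_left (hεbd ω).2
  set T : Set (Fin d → ℝ) := Metric.thickening α s with hTdef
  have hTmeas : MeasurableSet T := Metric.isOpen_thickening.measurableSet
  set K1 : ℝ := KL * KL * Mb' * Mb' * 1 * c⁻¹ * c⁻¹ with hK1def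
  have hK1nn : 0 ≤ K1 := by
    rw [hK1def]
    have hcinv : (0:ℝ) ≤ c⁻¹ := inv_nonneg.2 hc.le
    exact mul_nonneg (mul_nonneg (mul_nonneg (mul_nonneg (mul_nonneg
      (mul_nonneg hKLnn hKLnn) hMbnn) hMbnn) zero_le_one) hcinv) hcinv
  -- laws and independence
  have hindf : IndepFun X1 X2 ℙ := by
    have := hiid.1.comp (φ := Prod.fst) (ψ := Prod.fst) measurable_fst measurable_fst
    exact this
  have hident : Measure.map X2 ℙ = Measure.map X1 ℙ := by
    have := (hiid.2.comp (u := Prod.fst) measurable_fst).map_eq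
    exact this.symm
  have hprod : Measure.map (fun ω => (X1 ω, X2 ω)) ℙ
      = (Measure.map X1 ℙ).prod (Measure.map X2 ℙ) :=
    (indepFun_iff_map_prod_eq_prod_map_map hX1.aemeasurable hX2.aemeasurable).1 hindf
  haveI : IsProbabilityMeasure (Measure.map X1 ℙ) := Measure.isProbabilityMeasure_map hX1.aemeasurable
  refine ⟨(K1 * (2*R)^d)^4 * (Mf * (4*R)^d), ?_⟩
  filter_upwards [hℓ0.eventually_lt_const (show (0:ℝ) < α / R by positivity)] with n hn
  set l : ℝ := ℓ n with hldef
  have hl : 0 < l := hℓpos n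
  have hRl : R * l < α := by
    have := (lt_div_iff₀ hRpos).mp hn
    linarith [this]
  have hRlpos : 0 < R * l := mul_pos hRpos hl
  -- the event A
  set A : Set Ω := X1 ⁻¹' T ∩ (X2 ⁻¹' T ∩ {ω | dist (X1 ω) (X2 ω) ≤ 2*(R*l)}) with hAdef
  have hA : MeasurableSet A :=
    (hX1 hTmeas).inter ((hX2 hTmeas).inter
      (measurableSet_le (hX1.dist hX2) measurable_const))
  -- L vanishes far away
  have hLzero : ∀ v : Fin d → ℝ, R * l < ‖v‖ → L (l⁻¹ • v) = 0 := by
    intro v hv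
    apply image_eq_zero_of_notMem_tsupport
    intro hmem
    have h1 : ‖l⁻¹ • v‖ ≤ R := by
      simpa [Metric.mem_closedBall, dist_eq_norm] using hsupR hmem
    rw [norm_smul, Real.norm_eq_abs, abs_of_pos (inv_pos.2 hl)] at h1
    have := (inv_mul_le_iff₀ hl).mp h1
    rw [mul_comm R l] at hv
    linarith [hv, this]
  -- support analysis of the inner integrand
  have hsub : ∀ ω x,
      L (l⁻¹ • (x - X1 ω)) * L (l⁻¹ • (x - X2 ω)) * ε1 ω * ε2 ω * g x
        * (f (X1 ω))⁻¹ * (f (X2 ω))⁻¹ ≠ 0 →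
      x ∈ s ∧ ‖x - X1 ω‖ ≤ R * l ∧ ‖x - X2 ω‖ ≤ R * l := by
    intro ω x hne
    have h1 : L (l⁻¹ • (x - X1 ω)) ≠ 0 := fun h => hne (by rw [h]; ring)
    have h2 : L (l⁻¹ • (x - X2 ω)) ≠ 0 := fun h => hne (by rw [h]; ring)
    have hgx : g x ≠ 0 := fun h => hne (by rw [h]; ring)
    refine ⟨?_, ?_, ?_⟩
    · by_contra hxs
      exact hgx (by simp [hg, Set.indicator_of_notMem hxs])
    · by_contra hdist
      exact h1 (hLzero _ (lt_of_not_ge hdist))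
    · by_contra hdist
      exact h2 (hLzero _ (lt_of_not_ge hdist))
  have hzero : ∀ ω, ω ∉ A → ∀ x,
      L (l⁻¹ • (x - X1 ω)) * L (l⁻¹ • (x - X2 ω)) * ε1 ω * ε2 ω * g x
        * (f (X1 ω))⁻¹ * (f (X2 ω))⁻¹ = 0 := by
    intro ω hω x
    by_contra hne
    obtain ⟨hxs, h1, h2⟩ := hsub ω x hne
    apply hω
    have hX1T : X1 ω ∈ T := by
      rw [hTdef]
      refine Metric.mem_thickening_iff.2 ⟨x, hxs, ?_⟩
      rw [dist_eq_norm, norm_sub_rev]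
      exact lt_of_le_of_lt h1 hRl
    have hX2T : X2 ω ∈ T := by
      rw [hTdef]
      refine Metric.mem_thickening_iff.2 ⟨x, hxs, ?_⟩
      rw [dist_eq_norm, norm_sub_rev]
      exact lt_of_le_of_lt h2 hRl
    refine ⟨hX1T, hX2T, ?_⟩
    have := dist_triangle (X1 ω) x (X2 ω)
    have d1 : dist (X1 ω) x ≤ R * l := by rw [dist_eq_norm, norm_sub_rev]; exact h1
    have d2 : dist x (X2 ω) ≤ R * l := by rw [dist_eq_norm]; exact h2
    simp only [Set.mem_setOf_eq]
    linarith
  -- pointwise bound on the inner integrand for ω ∈ A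
  have hbd : ∀ ω ∈ A, ∀ x,
      |L (l⁻¹ • (x - X1 ω)) * L (l⁻¹ • (x - X2 ω)) * ε1 ω * ε2 ω * g x
        * (f (X1 ω))⁻¹ * (f (X2 ω))⁻¹|
      ≤ (Metric.closedBall (X1 ω) (R*l)).indicator (fun _ => K1) x := by
    rintro ω ⟨hω1, hω2, _⟩ x
    by_cases hx : x ∈ Metric.closedBall (X1 ω) (R*l)
    · rw [Set.indicator_of_mem hx, hK1def]
      have hf1 : (0:ℝ) < f (X1 ω) := lt_of_lt_of_le hc (hfc _ hω1)
      have hf2 : (0:ℝ) < f (X2 ω) := lt_of_lt_of_le hc (hfc _ hω2)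
      have hb1 : |(f (X1 ω))⁻¹| ≤ c⁻¹ := by
        rw [abs_of_pos (inv_pos.2 hf1)]
        exact inv_anti₀ hc (hfc _ hω1)
      have hb2 : |(f (X2 ω))⁻¹| ≤ c⁻¹ := by
        rw [abs_of_pos (inv_pos.2 hf2)]
        exact inv_anti₀ hc (hfc _ hω2)
      have hgb : |g x| ≤ 1 := by
        rw [hg]
        by_cases hxs : x ∈ s
        · simp [Set.indicator_of_mem hxs]
        · simp [Set.indicator_of_notMem hxs]
      exact abs_mul_le7 (hKL _) (hKL _) (hMb1 ω) (hMb2 ω) hgb hb1 hb2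
    · have h1 : R * l < ‖x - X1 ω‖ := by
        by_contra h
        exact hx (by simpa [Metric.mem_closedBall, dist_eq_norm] using not_lt.mp h)
      rw [Set.indicator_of_notMem hx, hLzero _ h1]
      simp
  -- bound on the inner integral for ω ∈ A
  have hIbd : ∀ ω ∈ A,
      |∫ x : Fin d → ℝ, L (l⁻¹ • (x - X1 ω)) * L (l⁻¹ • (x - X2 ω)) * ε1 ω * ε2 ω * g x
        * (f (X1 ω))⁻¹ * (f (X2 ω))⁻¹| ≤ K1 * ((2*R)^d * l^d) := by
    intro ω hω
    have hint : Integrable ((Metric.closedBall (X1 ω) (R*l)).indicator (fun _ => K1)) volume :=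
      (integrable_indicator_iff measurableSet_closedBall).2
        (integrableOn_const ((isCompact_closedBall _ _).measure_lt_top.ne))
    calc |∫ x : Fin d → ℝ, L (l⁻¹ • (x - X1 ω)) * L (l⁻¹ • (x - X2 ω)) * ε1 ω * ε2 ω * g x
        * (f (X1 ω))⁻¹ * (f (X2 ω))⁻¹|
        ≤ ∫ x : Fin d → ℝ, |L (l⁻¹ • (x - X1 ω)) * L (l⁻¹ • (x - X2 ω)) * ε1 ω * ε2 ω * g x
          * (f (X1 ω))⁻¹ * (f (X2 ω))⁻¹| := by
          have := norm_integral_le_integral_norm (μ := volume)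
            (fun x : Fin d → ℝ => L (l⁻¹ • (x - X1 ω)) * L (l⁻¹ • (x - X2 ω)) * ε1 ω * ε2 ω
              * g x * (f (X1 ω))⁻¹ * (f (X2 ω))⁻¹)
          simp only [Real.norm_eq_abs] at this
          exact this
      _ ≤ ∫ x : Fin d → ℝ, (Metric.closedBall (X1 ω) (R*l)).indicator (fun _ => K1) x :=
          integral_mono_of_nonneg (ae_of_all _ fun x => abs_nonneg _) hint
            (ae_of_all _ (hbd ω hω))
      _ = (volume (Metric.closedBall (X1 ω) (R*l))).toReal • K1 :=
          integral_indicator_const _ measurableSet_closedBall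
      _ = K1 * ((2*R)^d * l^d) := by
          rw [Real.volume_pi_closedBall _ hRlpos.le]
          rw [ENNReal.toReal_ofReal (by positivity)]
          rw [smul_eq_mul, Fintype.card_fin]
          rw [show (2 * (R * l)) = (2*R) * l by ring, mul_pow]
          ring
  -- bound on the probability of A
  have hPA : (ℙ A).toReal ≤ Mf * ((4*R)^d * l^d) := by
    have hrnn : (0:ℝ) ≤ 2*(R*l) := by positivity
    set S : Set ((Fin d → ℝ) × (Fin d → ℝ)) :=
      {p | p.2 ∈ T ∧ dist p.1 p.2 ≤ 2*(R*l)} with hSdef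
    have hSm : MeasurableSet S := by
      refine MeasurableSet.inter (measurable_snd hTmeas) ?_
      exact measurableSet_le (measurable_fst.dist measurable_snd) measurable_const
    have hAsub : A ⊆ (fun ω => (X1 ω, X2 ω)) ⁻¹' S := by
      rintro ω ⟨_, hω2, hω3⟩
      exact ⟨hω2, hω3⟩
    have key : ∀ x : Fin d → ℝ, (Measure.map X2 ℙ) (Prod.mk x ⁻¹' S)
        ≤ ENNReal.ofReal (Mf * ((4*R)^d * l^d)) := by
      intro x
      have hsub2 : Prod.mk x ⁻¹' S ⊆ T ∩ Metric.closedBall x (2*(R*l)) := by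
        rintro y ⟨hy1, hy2⟩
        exact ⟨hy1, by simpa [Metric.mem_closedBall, dist_comm] using hy2⟩
      have hEm : MeasurableSet (T ∩ Metric.closedBall x (2*(R*l))) :=
        hTmeas.inter measurableSet_closedBall
      calc (Measure.map X2 ℙ) (Prod.mk x ⁻¹' S)
          ≤ (Measure.map X2 ℙ) (T ∩ Metric.closedBall x (2*(R*l))) := measure_mono hsub2
        _ = ∫⁻ y in T ∩ Metric.closedBall x (2*(R*l)), ENNReal.ofReal (f y) := by
            rw [hident, hlaw, withDensity_apply _ hEm]
        _ ≤ ∫⁻ _ in T ∩ Metric.closedBall x (2*(R*l)), ENNReal.ofReal Mf :=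
            setLIntegral_mono measurable_const fun y hy => ENNReal.ofReal_le_ofReal (hMf y hy.1)
        _ = ENNReal.ofReal Mf * volume (T ∩ Metric.closedBall x (2*(R*l))) :=
            setLIntegral_const _ _
        _ ≤ ENNReal.ofReal Mf * volume (Metric.closedBall x (2*(R*l))) :=
            mul_le_mul_right (measure_mono Set.inter_subset_right) _
        _ = ENNReal.ofReal Mf * ENNReal.ofReal ((2*(2*(R*l)))^Fintype.card (Fin d)) := by
            rw [Real.volume_pi_closedBall _ hrnn]
        _ = ENNReal.ofReal (Mf * ((4*R)^d * l^d)) := by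
            rw [← ENNReal.ofReal_mul hMfnn, Fintype.card_fin]
            congr 1
            rw [show (2*(2*(R*l))) = (4*R) * l by ring, mul_pow]
    have hPAe : ℙ A ≤ ENNReal.ofReal (Mf * ((4*R)^d * l^d)) := by
      calc ℙ A ≤ ℙ ((fun ω => (X1 ω, X2 ω)) ⁻¹' S) := measure_mono hAsub
        _ = Measure.map (fun ω => (X1 ω, X2 ω)) ℙ S :=
            (Measure.map_apply (hX1.prodMk hX2) hSm).symm
        _ = (Measure.map X1 ℙ).prod (Measure.map X2 ℙ) S := by rw [hprod]
        _ = ∫⁻ x, (Measure.map X2 ℙ) (Prod.mk x ⁻¹' S) ∂(Measure.map X1 ℙ) :=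
            Measure.prod_apply hSm
        _ ≤ ∫⁻ _, ENNReal.ofReal (Mf * ((4*R)^d * l^d)) ∂(Measure.map X1 ℙ) :=
            lintegral_mono key
        _ = ENNReal.ofReal (Mf * ((4*R)^d * l^d)) := by simp
    exact ENNReal.toReal_le_of_le_ofReal (by positivity) hPAe
  -- the exponent bookkeeping
  have hp : l ^ (-(2 * d : ℤ)) = (l ^ (2*d))⁻¹ := by
    rw [zpow_neg]
    norm_cast
  have hp0 : (0:ℝ) ≤ (l ^ (2*d))⁻¹ := inv_nonneg.2 (pow_nonneg hl.le _)
  set DK : ℝ := ((l ^ (2*d))⁻¹ * (K1 * ((2*R)^d * l^d)))^4 with hDKdef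
  have hDK0 : 0 ≤ DK := by rw [hDKdef]; positivity
  -- pointwise bound on the ω-integrand
  have hptwise : ∀ ω,
      (l ^ (-(2 * d : ℤ)) *
        ∫ x : Fin d → ℝ, L (l⁻¹ • (x - X1 ω)) * L (l⁻¹ • (x - X2 ω)) *
          ε1 ω * ε2 ω * g x * (f (X1 ω))⁻¹ * (f (X2 ω))⁻¹)^4
      ≤ A.indicator (fun _ => DK) ω := by
    intro ω
    by_cases hω : ω ∈ A
    · rw [Set.indicator_of_mem hω, hp]
      have h1 : |(l ^ (2*d))⁻¹ *
          ∫ x : Fin d → ℝ, L (l⁻¹ • (x - X1 ω)) * L (l⁻¹ • (x - X2 ω)) *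
            ε1 ω * ε2 ω * g x * (f (X1 ω))⁻¹ * (f (X2 ω))⁻¹|
          ≤ (l ^ (2*d))⁻¹ * (K1 * ((2*R)^d * l^d)) := by
        rw [abs_mul, abs_of_nonneg hp0]
        exact mul_le_mul_of_nonneg_left (hIbd ω hω) hp0
      calc ((l ^ (2*d))⁻¹ * _)^4 = |(l ^ (2*d))⁻¹ * _|^4 :=
            ((by decide : Even 4).pow_abs _).symm
        _ ≤ ((l ^ (2*d))⁻¹ * (K1 * ((2*R)^d * l^d)))^4 :=
            pow_le_pow_left₀ (abs_nonneg _) h1 4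
        _ = DK := hDKdef.symm
    · rw [Set.indicator_of_notMem hω]
      have hI0 : (∫ x : Fin d → ℝ, L (l⁻¹ • (x - X1 ω)) * L (l⁻¹ • (x - X2 ω)) *
            ε1 ω * ε2 ω * g x * (f (X1 ω))⁻¹ * (f (X2 ω))⁻¹) = 0 := by
        calc (∫ x : Fin d → ℝ, L (l⁻¹ • (x - X1 ω)) * L (l⁻¹ • (x - X2 ω)) *
              ε1 ω * ε2 ω * g x * (f (X1 ω))⁻¹ * (f (X2 ω))⁻¹)
            = ∫ _ : Fin d → ℝ, (0:ℝ) := integral_congr_ae (ae_of_all _ (hzero ω hω))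
          _ = 0 := integral_zero _ _
      rw [hI0, mul_zero]
      norm_num
  -- final chain
  calc (∫ ω, (l ^ (-(2 * d : ℤ)) *
        ∫ x : Fin d → ℝ, L (l⁻¹ • (x - X1 ω)) * L (l⁻¹ • (x - X2 ω)) *
          ε1 ω * ε2 ω * g x * (f (X1 ω))⁻¹ * (f (X2 ω))⁻¹)^4 ∂ℙ)
      ≤ ∫ ω, A.indicator (fun _ => DK) ω ∂ℙ :=
        integral_mono_of_nonneg (ae_of_all _ fun ω => by positivity)
          ((integrable_const DK).indicator hA) (ae_of_all _ hptwise)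
    _ = (ℙ A).toReal • DK := integral_indicator_const _ hA
    _ = DK * (ℙ A).toReal := by rw [smul_eq_mul, mul_comm]
    _ ≤ DK * (Mf * ((4*R)^d * l^d)) := mul_le_mul_of_nonneg_left hPA hDK0
    _ = (K1 * (2*R)^d)^4 * (Mf * (4*R)^d) / l ^ (3*d) := by
        rw [hDKdef]
        field_simp
        ring
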